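/- Let ψ : [0,∞) → ℝ be twice continuously differentiable with ψ''(t) = (3 g(t)² − 1) ψ(t) for all t ≥ 0, ψ(0) = 0, and ψ(t) → 0 as t → ∞. Then ψ is identically zero on [0,∞). -/

import Mathlib

/-- The heteroclinic solution `g(t) = tanh(t/√2)` of the 1-D Allen–Cahn equation. -/
noncomputable def hetero (t : ℝ) : ℝ := Real.tanh (t / Real.sqrt 2)

open Set Filter Real

lemma hasDerivAt_tanh (x : ℝ) : HasDerivAt Real.tanh (1 - Real.tanh x ^ 2) x := by
  have h : Real.tanh = fun y => Real.sinh y / Real.cosh y := funext fun y => Real.tanh_eq_sinh_div_cosh y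
  rw [h]
  have := (Real.hasDerivAt_sinh x).div (Real.hasDerivAt_cosh x) (Real.cosh_pos x).ne'
  refine this.congr_deriv ?_
  have h1 : Real.cosh x ^ 2 - Real.sinh x ^ 2 = 1 := Real.cosh_sq_sub_sinh_sq x
  field_simp

lemma tanh_sq_lt_one (x : ℝ) : Real.tanh x ^ 2 < 1 := by
  rw [Real.tanh_eq_sinh_div_cosh, div_pow, div_lt_one (by positivity)]
  nlinarith [Real.cosh_sq_sub_sinh_sq x]

noncomputable def φ₁ (t : ℝ) : ℝ := (1 - hetero t ^ 2) / Real.sqrt 2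
noncomputable def φ₂ (t : ℝ) : ℝ := hetero t ^ 3 - hetero t
noncomputable def qq (t : ℝ) : ℝ := 3 * hetero t ^ 2 - 1

lemma sqrt2_pos : (0:ℝ) < Real.sqrt 2 := by positivity

lemma hasDerivAt_hetero (t : ℝ) : HasDerivAt hetero (φ₁ t) t := by
  have h := (hasDerivAt_tanh (t / Real.sqrt 2)).comp t ((hasDerivAt_id t).div_const (Real.sqrt 2))
  refine h.congr_deriv ?_
  simp [φ₁, hetero, div_eq_mul_inv, mul_comm]

lemma hasDerivAt_φ₁ (t : ℝ) : HasDerivAt φ₁ (φ₂ t) t := by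
  have h := (((hasDerivAt_hetero t).pow 2).const_sub 1).div_const (Real.sqrt 2)
  refine h.congr_deriv ?_
  have h2 : Real.sqrt 2 * Real.sqrt 2 = 2 := Real.mul_self_sqrt (by norm_num)
  simp only [φ₂, φ₁]
  field_simp
  ring_nf
  rw [Real.sq_sqrt (by norm_num : (0:ℝ) ≤ 2)]

lemma hasDerivAt_φ₂ (t : ℝ) : HasDerivAt φ₂ (qq t * φ₁ t) t := by
  have h := ((hasDerivAt_hetero t).pow 3).sub (hasDerivAt_hetero t)
  refine h.congr_deriv ?_
  simp only [qq, φ₁]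
  ring

lemma qq_abs_le (t : ℝ) : |qq t| ≤ 2 := by
  have h1 := _root_.tanh_sq_lt_one (t / Real.sqrt 2)
  have h2 : (0:ℝ) ≤ hetero t ^ 2 := sq_nonneg _
  rw [abs_le]
  constructor <;> simp only [qq, hetero] at * <;> nlinarith

lemma continuous_hetero : Continuous hetero :=
  Differentiable.continuous (fun t => (hasDerivAt_hetero t).differentiableAt)

lemma continuous_φ₁ : Continuous φ₁ :=
  Differentiable.continuous (fun t => (hasDerivAt_φ₁ t).differentiableAt)

lemma continuous_φ₂ : Continuous φ₂ :=
  Differentiable.continuous (fun t => (hasDerivAt_φ₂ t).differentiableAt)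

lemma continuous_qq : Continuous qq := by
  unfold qq
  exact (continuous_const.mul (continuous_hetero.pow 2)).sub continuous_const

lemma tendsto_φ₁ : Tendsto φ₁ atTop (nhds 0) := by
  have key : ∀ t, φ₁ t = 1 / Real.cosh (t / Real.sqrt 2) ^ 2 / Real.sqrt 2 := by
    intro t
    have hc := (Real.cosh_pos (t / Real.sqrt 2)).ne'
    simp only [φ₁, hetero, Real.tanh_eq_sinh_div_cosh, div_pow]
    rw [div_left_inj' (sqrt2_pos.ne')]
    field_simp
    exact Real.cosh_sq_sub_sinh_sq _
  rw [show φ₁ = fun t => 1 / Real.cosh (t / Real.sqrt 2) ^ 2 / Real.sqrt 2 from funext key]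
  have hexp : Tendsto (fun t : ℝ => t / Real.sqrt 2) atTop atTop :=
    tendsto_id.atTop_div_const sqrt2_pos
  have hcosh : Tendsto (fun t : ℝ => Real.cosh (t / Real.sqrt 2)) atTop atTop := by
    apply tendsto_atTop_mono (fun t => ?_) ((Real.tendsto_exp_atTop.comp hexp).atTop_div_const (by norm_num : (0:ℝ) < 2))
    rw [Real.cosh_eq]
    have := (Real.exp_pos (-(t / Real.sqrt 2))).le
    simp only [Function.comp_apply]
    linarith
  have h1 : Tendsto (fun t : ℝ => (Real.cosh (t / Real.sqrt 2) ^ 2)⁻¹) atTop (nhds 0) :=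
    tendsto_inv_atTop_zero.comp ((tendsto_pow_atTop (two_ne_zero)).comp hcosh)
  have := h1.div_const (Real.sqrt 2)
  rw [zero_div] at this
  convert this using 2 with t
  rw [one_div]

lemma tendsto_φ₂ : Tendsto φ₂ atTop (nhds 0) := by
  have hb : ∀ t, |φ₂ t| ≤ Real.sqrt 2 * |φ₁ t| := by
    intro t
    have h1 : |hetero t| ≤ 1 := by
      have := _root_.tanh_sq_lt_one (t / Real.sqrt 2)
      rw [abs_le]
      constructor <;> simp only [hetero] at * <;> nlinarith
    have h2 : φ₂ t = -(hetero t * (Real.sqrt 2 * φ₁ t)) := by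
      simp only [φ₂, φ₁]
      have h2 : Real.sqrt 2 * Real.sqrt 2 = 2 := Real.mul_self_sqrt (by norm_num)
      field_simp
      ring
    rw [h2, abs_neg, abs_mul, abs_mul, abs_of_nonneg sqrt2_pos.le]
    calc |hetero t| * (Real.sqrt 2 * |φ₁ t|) ≤ 1 * (Real.sqrt 2 * |φ₁ t|) :=
          mul_le_mul_of_nonneg_right h1 (by positivity)
      _ = Real.sqrt 2 * |φ₁ t| := one_mul _
  have h := tendsto_φ₁.abs.const_mul (Real.sqrt 2)
  rw [abs_zero, mul_zero] at h
  exact squeeze_zero_norm hb h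

/-- A `C²` solution of the homogeneous linearized equation `ψ'' = (3g² − 1)ψ` on `[0,∞)`
with `ψ(0) = 0` and `ψ → 0` at `∞` vanishes identically on `[0,∞)`. -/
theorem homogeneous_solution_zero (ψ : ℝ → ℝ) (hψ : ContDiffOn ℝ 2 ψ (Set.Ici 0))
    (hode : ∀ t : ℝ, 0 ≤ t → deriv (deriv ψ) t = (3 * hetero t ^ 2 - 1) * ψ t)
    (h0 : ψ 0 = 0) (hlim : Filter.Tendsto ψ Filter.atTop (nhds 0)) :
    ∀ t : ℝ, 0 ≤ t → ψ t = 0 := by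
  have hode' : ∀ t : ℝ, 0 ≤ t → deriv (deriv ψ) t = qq t * ψ t := hode
  set χ : ℝ → ℝ := derivWithin ψ (Set.Ici 0) with hχdef
  have hUD : UniqueDiffOn ℝ (Set.Ici (0:ℝ)) := uniqueDiffOn_Ici 0
  have hψc : ContinuousOn ψ (Set.Ici 0) := hψ.continuousOn
  have hψd : ∀ t ∈ Set.Ici (0:ℝ), HasDerivWithinAt ψ (χ t) (Set.Ici 0) t :=
    fun t ht => (hψ.differentiableOn (by norm_num) t ht).hasDerivWithinAt
  have hχ1 : ContDiffOn ℝ 1 χ (Set.Ici 0) := hψ.derivWithin hUD (by norm_num)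
  have hχc : ContinuousOn χ (Set.Ici 0) := hχ1.continuousOn
  -- at interior points, ψ has a genuine (two-sided) derivative χ
  have hψd' : ∀ t : ℝ, 0 < t → HasDerivAt ψ (χ t) t :=
    fun t ht => ((hψd t ht.le).hasDerivAt (Ici_mem_nhds ht))
  have hχeq : Set.EqOn χ (deriv ψ) (Set.Ioi 0) :=
    fun t ht => ((hψd' t ht).deriv).symm
  -- at interior points, χ has a genuine derivative qq t * ψ t
  have hχd' : ∀ t : ℝ, 0 < t → HasDerivAt χ (qq t * ψ t) t := by
    intro t ht
    have hdd : HasDerivAt χ (derivWithin χ (Set.Ici 0) t) t :=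
      ((hχ1.differentiableOn (by norm_num) t ht.le).hasDerivWithinAt).hasDerivAt (Ici_mem_nhds ht)
    have heq : derivWithin χ (Set.Ici 0) t = qq t * ψ t := by
      have h1 : deriv χ t = deriv (deriv ψ) t :=
        Filter.EventuallyEq.deriv_eq
          (Filter.eventuallyEq_of_mem (Ioi_mem_nhds ht) hχeq)
      rw [← hdd.deriv, h1, hode' t ht.le]
    rwa [heq] at hdd
  -- one-sided second derivative at 0 (by continuity)
  have hχd : ∀ t ∈ Set.Ici (0:ℝ), HasDerivWithinAt χ (qq t * ψ t) (Set.Ici 0) t := by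
    intro t ht
    rcases eq_or_lt_of_le (Set.mem_Ici.1 ht) with rfl | ht'
    · -- t = 0
      have hdd : HasDerivWithinAt χ (derivWithin χ (Set.Ici 0) 0) (Set.Ici 0) 0 :=
        (hχ1.differentiableOn (by norm_num) 0 Set.self_mem_Ici).hasDerivWithinAt
      have hDc : ContinuousOn (derivWithin χ (Set.Ici 0)) (Set.Ici 0) :=
        hχ1.continuousOn_derivWithin hUD le_rfl
      have hne : (nhdsWithin (0:ℝ) (Set.Ioi 0)).NeBot := nhdsGT_neBot 0
      have hle : nhdsWithin (0:ℝ) (Set.Ioi 0) ≤ nhdsWithin 0 (Set.Ici 0) :=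
        nhdsWithin_mono 0 Set.Ioi_subset_Ici_self
      have hDeq : Set.EqOn (derivWithin χ (Set.Ici 0)) (fun s => qq s * ψ s) (Set.Ioi 0) := by
        intro s hs
        exact (hχd' s hs).hasDerivWithinAt.derivWithin (hUD s (Set.mem_Ici.2 (Set.mem_Ioi.1 hs).le))
      have key : derivWithin χ (Set.Ici 0) 0 = qq 0 * ψ 0 := by
        have t1 : Filter.Tendsto (fun s => qq s * ψ s) (nhdsWithin 0 (Set.Ioi 0))
            (nhds (derivWithin χ (Set.Ici 0) 0)) :=
          Filter.Tendsto.congr'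
            (Filter.eventuallyEq_of_mem self_mem_nhdsWithin fun s hs => hDeq hs)
            ((hDc 0 Set.self_mem_Ici).mono_left hle)
        have t2 : Filter.Tendsto (fun s => qq s * ψ s) (nhdsWithin 0 (Set.Ioi 0))
            (nhds (qq 0 * ψ 0)) := by
          have : ContinuousWithinAt (fun s => qq s * ψ s) (Set.Ici 0) 0 :=
            (continuous_qq.continuousOn.mul hψc) 0 Set.self_mem_Ici
          exact this.mono_left hle
        exact tendsto_nhds_unique t1 t2
      rwa [key] at hdd
    · exact (hχd' t ht').hasDerivWithinAt
  -- ψ' → 0 at infinity, via the mean value theorem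
  have hχ0 : Filter.Tendsto χ Filter.atTop (nhds 0) := by
    rw [Metric.tendsto_atTop]
    intro ε hε
    rw [Metric.tendsto_atTop] at hlim
    obtain ⟨N, hN⟩ := hlim (ε / 8) (by linarith)
    refine ⟨max N 1, fun t ht => ?_⟩
    have htN : N ≤ t := le_trans (le_max_left _ _) ht
    have ht1 : (1:ℝ) ≤ t := le_trans (le_max_right _ _) ht
    have ht0 : (0:ℝ) < t := by linarith
    have hsmall : ∀ s : ℝ, t ≤ s → |ψ s| < ε / 8 := by
      intro s hs
      have := hN s (le_trans htN hs)
      rwa [Real.dist_eq, sub_zero] at this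
    -- MVT for ψ on [t, t+1]
    obtain ⟨c, hc, hceq⟩ := exists_hasDerivAt_eq_slope ψ χ (by linarith : t < t + 1)
      (hψc.mono (Set.Icc_subset_Ici_iff (by linarith)|>.2 ht0.le))
      (fun x hx => hψd' x (by linarith [hx.1]))
    have hcb : |χ c| ≤ ε / 4 := by
      rw [hceq]
      have h1 := hsmall (t+1) (by linarith)
      have h2 := hsmall t le_rfl
      rw [show t + 1 - t = 1 by ring, div_one]
      calc |ψ (t+1) - ψ t| ≤ |ψ (t+1)| + |ψ t| := abs_sub _ _
        _ ≤ ε / 4 := by linarith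
    -- MVT for χ on [t, c]
    obtain ⟨d, hd, hdeq⟩ := exists_hasDerivAt_eq_slope χ (fun x => qq x * ψ x) hc.1
      (hχc.mono (Set.Icc_subset_Ici_iff hc.1.le |>.2 ht0.le))
      (fun x hx => hχd' x (by linarith [hx.1]))
    have hdb : |qq d * ψ d| ≤ ε / 4 := by
      rw [abs_mul]
      have h1 := qq_abs_le d
      have h2 := (hsmall d hd.1.le).le
      calc |qq d| * |ψ d| ≤ 2 * (ε / 8) :=
        mul_le_mul h1 h2 (abs_nonneg _) (by norm_num)
        _ = ε / 4 := by ring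
    have hct : c - t ≤ 1 := by linarith [hc.2]
    have hct0 : 0 < c - t := by linarith [hc.1]
    have : χ t = χ c - qq d * ψ d * (c - t) := by
      field_simp at hdeq
      linarith [hdeq]
    rw [Real.dist_eq, sub_zero, this]
    have : |χ c - qq d * ψ d * (c - t)| ≤ |χ c| + |qq d * ψ d| * (c - t) := by
      calc |χ c - qq d * ψ d * (c - t)| ≤ |χ c| + |qq d * ψ d * (c-t)| := abs_sub _ _
        _ = |χ c| + |qq d * ψ d| * |c - t| := by rw [abs_mul]
        _ = |χ c| + |qq d * ψ d| * (c - t) := by rw [abs_of_pos hct0]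
    have hfin : |χ c| + |qq d * ψ d| * (c - t) ≤ ε / 4 + ε / 4 := by
      have : |qq d * ψ d| * (c - t) ≤ (ε/4) * 1 :=
        mul_le_mul hdb hct hct0.le (by linarith)
      linarith
    linarith
  -- the Wronskian of ψ with the explicit solution φ₁
  set W : ℝ → ℝ := fun t => χ t * φ₁ t - ψ t * φ₂ t with hWdef
  have hW' : ∀ t : ℝ, 0 < t → HasDerivAt W 0 t := by
    intro t ht
    have h := ((hχd' t ht).mul (hasDerivAt_φ₁ t)).sub ((hψd' t ht).mul (hasDerivAt_φ₂ t))
    refine h.congr_deriv ?_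
    simp only [qq, φ₁, φ₂, hetero]
    ring
  have hWc : ContinuousOn W (Set.Ici 0) :=
    (hχc.mul continuous_φ₁.continuousOn).sub (hψc.mul continuous_φ₂.continuousOn)
  -- W is constant on (0, ∞)
  have hWconst : ∀ s t : ℝ, 0 < s → s ≤ t → W t = W s := by
    intro s t hs hst
    have := constant_of_has_deriv_right_zero
      (f := W) (a := s) (b := t)
      (hWc.mono (Set.Icc_subset_Ici_iff hst |>.2 hs.le))
      (fun x hx => (hW' x (lt_of_lt_of_le hs hx.1)).hasDerivWithinAt)
    exact this t (Set.right_mem_Icc.2 hst)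
  -- W tends to 0 at infinity
  have hWlim : Filter.Tendsto W Filter.atTop (nhds 0) := by
    have := (hχ0.mul tendsto_φ₁).sub (hlim.mul tendsto_φ₂)
    simpa using this
  -- hence W vanishes on (0, ∞)
  have hWzero : ∀ s : ℝ, 0 < s → W s = 0 := by
    intro s hs
    have h1 : Filter.Tendsto W Filter.atTop (nhds (W s)) := by
      apply Filter.Tendsto.congr' _ (tendsto_const_nhds (α := ℝ) (f := Filter.atTop))
      filter_upwards [Filter.eventually_ge_atTop s] with t ht
      exact (hWconst s t hs ht).symm
    exact tendsto_nhds_unique h1 hWlim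
  -- W is continuous at 0 from the right, so W 0 = 0, giving χ 0 = 0
  have hW0 : W 0 = 0 := by
    have h1 : Filter.Tendsto W (nhdsWithin 0 (Set.Ioi 0)) (nhds (W 0)) :=
      (hWc 0 Set.self_mem_Ici).mono_left (nhdsWithin_mono 0 Set.Ioi_subset_Ici_self)
    have h2 : Filter.Tendsto W (nhdsWithin 0 (Set.Ioi 0)) (nhds 0) := by
      apply Filter.Tendsto.congr' _ (tendsto_const_nhds (α := ℝ))
      exact Filter.eventuallyEq_of_mem self_mem_nhdsWithin
        fun s hs => (hWzero s hs).symm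
    exact tendsto_nhds_unique h1 h2
  have hχ00 : χ 0 = 0 := by
    have hφ10 : φ₁ 0 = 1 / Real.sqrt 2 := by
      simp [φ₁, hetero, Real.tanh_eq_sinh_div_cosh]
    have : χ 0 * (1 / Real.sqrt 2) = 0 := by
      have := hW0
      simp only [hWdef, h0, zero_mul, sub_zero, hφ10] at this
      exact this
    have h2 : (1:ℝ) / Real.sqrt 2 ≠ 0 := by positivity
    exact (mul_eq_zero.1 this).resolve_right h2
  -- uniqueness of ODE solutions: ψ ≡ 0
  intro t ht
  set v : ℝ → ℝ × ℝ → ℝ × ℝ := fun s p => (p.2, qq s * p.1) with hv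
  have hvLip : ∀ s : ℝ, LipschitzWith 2 (v s) := by
    intro s
    apply LipschitzWith.of_dist_le_mul
    intro p r
    simp only [hv, Prod.dist_eq, Real.dist_eq]
    rw [← mul_sub, abs_mul]
    have hq := qq_abs_le s
    have h1 : |p.2 - r.2| ≤ 2 * max |p.1 - r.1| |p.2 - r.2| := by
      have := le_max_right |p.1 - r.1| |p.2 - r.2|
      have h0 : (0:ℝ) ≤ max |p.1 - r.1| |p.2 - r.2| :=
        le_trans (abs_nonneg _) (le_max_left _ _)
      linarith
    have h2 : |qq s| * |p.1 - r.1| ≤ 2 * max |p.1 - r.1| |p.2 - r.2| := by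
      have hm := le_max_left |p.1 - r.1| |p.2 - r.2|
      have := mul_le_mul hq hm (abs_nonneg _) (by norm_num)
      linarith
    have : max |p.2 - r.2| (|qq s| * |p.1 - r.1|) ≤ 2 * max |p.1 - r.1| |p.2 - r.2| :=
      max_le h1 h2
    simpa using this
  have hfc : ContinuousOn (fun s => (ψ s, χ s)) (Set.Icc 0 t) :=
    ((hψc.mono (Set.Icc_subset_Ici_self)).prodMk (hχc.mono Set.Icc_subset_Ici_self))
  have hfd : ∀ u ∈ Set.Ico (0:ℝ) t,
      HasDerivWithinAt (fun s => (ψ s, χ s)) (v u (ψ u, χ u)) (Set.Ici u) u := by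
    intro u hu
    have h1 := (hψd u hu.1).mono (Set.Ici_subset_Ici.2 hu.1)
    have h2 := (hχd u hu.1).mono (Set.Ici_subset_Ici.2 hu.1)
    exact h1.prodMk h2
  have hgd : ∀ u ∈ Set.Ico (0:ℝ) t,
      HasDerivWithinAt (fun _ : ℝ => ((0:ℝ), (0:ℝ))) (v u (0, 0)) (Set.Ici u) u := by
    intro u hu
    have : v u ((0:ℝ), (0:ℝ)) = (0, 0) := by simp [hv]
    rw [this]
    exact hasDerivWithinAt_const u _ _
  have := ODE_solution_unique_of_mem_Icc_right (v := v) (s := fun _ => Set.univ)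
    (fun s _ => (hvLip s).lipschitzOnWith)
    hfc hfd (fun _ _ => Set.mem_univ _)
    continuousOn_const hgd (fun _ _ => Set.mem_univ _)
    (by rw [h0, hχ00])
  have := this (Set.right_mem_Icc.2 ht)
  simpa using congrArg Prod.fst this
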